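/- Let φ := ∀y(∀x(x∈y ↔ x∈x) → y∈y) (asserting self-membership of the co-Russell set) and let β := ∃y∀x(x∈y ↔ ((φ → x∈x) ∧ (¬φ → ¬x∈x))). Then BST ∪ {β} is satisfiable, and the sentence ∃y(∀x(x∈y ↔ x∈x) ∧ y∈y) — asserting that the co-Russell set exists and is a member of itself — holds in every model of BST ∪ {β}. -/

import Mathlib

open FirstOrder FirstOrder.Language

namespace SetParadox

/-- The language with a single binary relation symbol `∈`. -/
def L : Language := ⟨fun _ => Empty, fun n => match n with | 2 => Unit | _ => Empty⟩

/-- The membership relation symbol. -/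
def memRel : L.Relations 2 := Unit.unit

/-- `memF t₁ t₂` is the atomic formula `t₁ ∈ t₂`. -/
def memF {n : ℕ} (t₁ t₂ : L.Term (Empty ⊕ Fin n)) : L.BoundedFormula Empty n :=
  memRel.boundedFormula₂ t₁ t₂

/-- Extensionality: `∀y∀z(∀x(x∈y ↔ x∈z) → y=z)`. -/
def extAx : L.Sentence :=
  ∀' ∀' ((∀' (memF (&2) (&0) ⇔ memF (&2) (&1))) ⟹ ((&0) =' (&1)))

/-- Basic set theory: the theory whose only axiom is extensionality. -/
def BST : L.Theory := {extAx}

/-- The UC-instance `∃y∀x(x∈y ↔ φ(x))` determined by a formula `φ` with one free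
variable `x` (so that `y` does not occur free in `φ`). -/
def UCinst (φ : L.BoundedFormula Empty 1) : L.Sentence :=
  ∃' ∀' (memF (&1) (&0) ⇔ φ.liftAt 1 0)


/-- `φ := ∀y(∀x(x∈y ↔ x∈x) → y∈y)`: the co-Russell set is a member of itself. -/
def coRussellSelfMem : L.Sentence :=
  ∀' ((∀' (memF (&1) (&0) ⇔ memF (&1) (&1))) ⟹ memF (&0) (&0))

/-- `β := ∃y∀x(x∈y ↔ ((φ → x∈x) ∧ (¬φ → ¬x∈x)))`. -/
def betaSent : L.Sentence :=
  UCinst ((coRussellSelfMem.liftAt 1 0 ⟹ memF (&0) (&0)) ⊓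
    (∼(coRussellSelfMem.liftAt 1 0) ⟹ ∼(memF (&0) (&0))))

variable {M : Type*} [L.Structure M]

def mem (a b : M) : Prop := Structure.RelMap memRel ![a, b]

lemma realize_memF {n} {t₁ t₂ : L.Term (Empty ⊕ Fin n)} {v : Empty → M} {xs : Fin n → M} :
    (memF t₁ t₂).Realize v xs ↔ mem (t₁.realize (Sum.elim v xs)) (t₂.realize (Sum.elim v xs)) := by
  simp [memF, mem]

lemma realize_lift_sentence (φ : L.Sentence) (v : Empty → M) (xs : Fin 1 → M) :
    (φ.liftAt 1 0).Realize v xs ↔ M ⊨ φ := by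
  rw [BoundedFormula.realize_liftAt (by norm_num)]
  unfold Sentence.Realize Formula.Realize
  rw [Subsingleton.elim v default, Subsingleton.elim (xs ∘ _ : Fin 0 → M) default]

lemma realize_coRussell :
    M ⊨ coRussellSelfMem ↔ ∀ y : M, (∀ x, mem x y ↔ mem x x) → mem y y := by
  simp only [coRussellSelfMem, Sentence.Realize, Formula.Realize,
    BoundedFormula.realize_all, BoundedFormula.realize_imp, BoundedFormula.realize_iff,
    realize_memF, Term.realize_var, Sum.elim_inr, Function.comp_apply, Fin.snoc,
    Fin.castLT]
  norm_num

lemma realize_ext :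
    M ⊨ extAx ↔ ∀ y z : M, (∀ x, mem x y ↔ mem x z) → y = z := by
  simp only [extAx, Sentence.Realize, Formula.Realize,
    BoundedFormula.realize_all, BoundedFormula.realize_imp, BoundedFormula.realize_iff,
    BoundedFormula.realize_bdEqual,
    realize_memF, Term.realize_var, Sum.elim_inr, Function.comp_apply, Fin.snoc,
    Fin.castLT]
  norm_num

lemma realize_beta :
    M ⊨ betaSent ↔ ∃ y : M, ∀ x : M, mem x y ↔
      ((M ⊨ coRussellSelfMem → mem x x) ∧ (¬ M ⊨ coRussellSelfMem → ¬ mem x x)) := by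
  simp only [betaSent, UCinst, Sentence.Realize, Formula.Realize,
    BoundedFormula.realize_all, BoundedFormula.realize_ex, BoundedFormula.realize_imp,
    BoundedFormula.realize_iff, BoundedFormula.realize_inf, BoundedFormula.realize_not,
    BoundedFormula.realize_liftAt (show (0:ℕ) ≤ 1 by norm_num),
    realize_lift_sentence,
    realize_memF, Term.realize_var, Sum.elim_inr, Function.comp_apply, Fin.snoc,
    Fin.castLT, Fin.addNat]
  norm_num

lemma realize_goal :
    M ⊨ ((∃' ((∀' (memF (&1) (&0) ⇔ memF (&1) (&1))) ⊓ memF (&0) (&0))) : L.Sentence) ↔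
      ∃ y : M, (∀ x, mem x y ↔ mem x x) ∧ mem y y := by
  simp only [Sentence.Realize, Formula.Realize,
    BoundedFormula.realize_all, BoundedFormula.realize_ex, BoundedFormula.realize_inf,
    BoundedFormula.realize_iff,
    realize_memF, Term.realize_var, Sum.elim_inr, Function.comp_apply, Fin.snoc,
    Fin.castLT]
  norm_num


instance unitStruc : L.Structure Unit := ⟨fun f => f.elim, fun _ _ => True⟩

lemma unit_mem (a b : Unit) : mem a b := trivial

lemma unit_models : Unit ⊨ (BST ∪ {betaSent} : L.Theory) := by
  rw [Theory.model_iff]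
  intro φ hφ
  rcases hφ with hφ | hφ
  · rw [Set.mem_singleton_iff.mp hφ, realize_ext]
    intro y z _
    exact Subsingleton.elim y z
  · rw [Set.mem_singleton_iff.mp hφ, realize_beta]
    have hc : Unit ⊨ coRussellSelfMem := realize_coRussell.mpr fun y _ => unit_mem y y
    exact ⟨(), fun x => ⟨fun _ => ⟨fun _ => unit_mem x x, fun h => absurd hc h⟩,
      fun _ => unit_mem x ()⟩⟩

/-- `BST ∪ {β}` is satisfiable, and the sentence `∃y(∀x(x∈y ↔ x∈x) ∧ y∈y)` — the
co-Russell set exists and is a member of itself — holds in every model of `BST ∪ {β}`. -/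
theorem coRussell_selfMem_provable :
    (BST ∪ {betaSent}).IsSatisfiable ∧
    ((BST ∪ {betaSent}) ⊨ᵇ
      ((∃' ((∀' (memF (&1) (&0) ⇔ memF (&1) (&1))) ⊓ memF (&0) (&0))) : L.Sentence)) := by
  constructor
  · exact ⟨@Theory.ModelType.mk L _ Unit _ unit_models ⟨()⟩⟩
  · rw [Theory.models_sentence_iff]
    intro M
    have hM : (M : Type _) ⊨ (BST ∪ {betaSent} : L.Theory) := M.is_model
    have hβ : (M : Type _) ⊨ betaSent :=
      hM.realize_of_mem betaSent (Set.mem_union_right _ rfl)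
    rw [realize_beta] at hβ
    obtain ⟨b, hb⟩ := hβ
    rw [realize_goal]
    by_cases hφ : (M : Type _) ⊨ coRussellSelfMem
    · refine ⟨b, fun x => ⟨fun h => ((hb x).mp h).1 hφ,
        fun h => (hb x).mpr ⟨fun _ => h, fun h' => absurd hφ h'⟩⟩, ?_⟩
      exact realize_coRussell.mp hφ b fun x => ⟨fun h => ((hb x).mp h).1 hφ,
        fun h => (hb x).mpr ⟨fun _ => h, fun h' => absurd hφ h'⟩⟩
    · have h : mem b b ↔ ¬ mem b b :=
        ⟨fun h => ((hb b).mp h).2 hφ,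
         fun h => (hb b).mpr ⟨fun h' => absurd h' hφ, fun _ => h⟩⟩
      exact absurd h (iff_not_self)

end SetParadox
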